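/- Assume the pair (ζ, n) satisfies condition (★) with respect to (m, v_0, v_1, ℓ, ζ⁰). Let X be an ADHM representation with dim V_∞ = 1, dim V_0 = v_0 and dim V_1 = v_1, and let F• be a full flag of V_1 of length N = v_1. If (X, F•) is (ζ,n)-semistable, then (X, F•) is (ζ,n)-stable. -/

import Mathlib

open Module


section ADHMPrelim

/-- An ADHM representation on the blow-up quiver: vector spaces `V0, V1, Vinf` and maps
`B1 B2 : V1 → V0`, `d : V0 → V1`, and `r`-tuples of maps `i : Vinf → V0`, `j : V1 → Vinf`
(encoding `i : Vinf ⊗ ℂ^r → V0` and `j : V1 → Vinf ⊗ ℂ^r`), satisfying the ADHM relation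
`B1 ∘ d ∘ B2 - B2 ∘ d ∘ B1 + i ∘ j = 0`. -/
structure ADHMData (r : ℕ) (V0 V1 Vinf : Type*)
    [AddCommGroup V0] [Module ℂ V0] [AddCommGroup V1] [Module ℂ V1]
    [AddCommGroup Vinf] [Module ℂ Vinf] where
  B1 : V1 →ₗ[ℂ] V0
  B2 : V1 →ₗ[ℂ] V0
  d : V0 →ₗ[ℂ] V1
  i : Fin r → (Vinf →ₗ[ℂ] V0)
  j : Fin r → (V1 →ₗ[ℂ] Vinf)
  rel : B1 ∘ₗ d ∘ₗ B2 - B2 ∘ₗ d ∘ₗ B1 + ∑ k : Fin r, (i k) ∘ₗ (j k) = 0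

variable {r : ℕ} {V0 V1 Vinf : Type*}
  [AddCommGroup V0] [Module ℂ V0] [AddCommGroup V1] [Module ℂ V1]
  [AddCommGroup Vinf] [Module ℂ Vinf]

/-- A submodule of an ADHM representation: a triple of subspaces invariant under all the
structure maps. -/
structure ADHMSub (X : ADHMData r V0 V1 Vinf) where
  S0 : Submodule ℂ V0
  S1 : Submodule ℂ V1
  Sinf : Submodule ℂ Vinf
  hB1 : ∀ x ∈ S1, X.B1 x ∈ S0
  hB2 : ∀ x ∈ S1, X.B2 x ∈ S0
  hd : ∀ x ∈ S0, X.d x ∈ S1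
  hi : ∀ (k : Fin r), ∀ x ∈ Sinf, X.i k x ∈ S0
  hj : ∀ (k : Fin r), ∀ x ∈ S1, X.j k x ∈ Sinf

namespace ADHMSub

variable {X : ADHMData r V0 V1 Vinf}

/-- `rank S = dim S0 + dim S1 + dim S∞`, as a rational number. -/
noncomputable def rank (S : ADHMSub X) : ℚ :=
  (finrank ℂ S.S0 : ℚ) + (finrank ℂ S.S1 : ℚ) + (finrank ℂ S.Sinf : ℚ)

/-- `ζ·vdim S = ζ₀ dim S0 + ζ₁ dim S1 + ζ∞ dim S∞`. -/
noncomputable def zdeg (ζ : ℚ × ℚ × ℚ) (S : ADHMSub X) : ℚ :=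
  ζ.1 * (finrank ℂ S.S0 : ℚ) + ζ.2.1 * (finrank ℂ S.S1 : ℚ) + ζ.2.2 * (finrank ℂ S.Sinf : ℚ)

/-- The slope `μ_{ζ,n}(S)` of a submodule with respect to a flag `F` of length `N`. -/
noncomputable def mu (ζ : ℚ × ℚ × ℚ) (n : ℕ → ℚ) (N : ℕ) (F : ℕ → Submodule ℂ V1)
    (S : ADHMSub X) : ℚ :=
  (S.zdeg ζ + ∑ k ∈ Finset.Icc 1 N, n k * (finrank ℂ ↥(S.S1 ⊓ F k) : ℚ)) / S.rank

/-- A submodule is nonzero if one of its components is nonzero. -/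
def IsNonzero (S : ADHMSub X) : Prop := S.S0 ≠ ⊥ ∨ S.S1 ≠ ⊥ ∨ S.Sinf ≠ ⊥

/-- A submodule is proper if one of its components is a proper subspace. -/
def IsProper (S : ADHMSub X) : Prop := S.S0 ≠ ⊤ ∨ S.S1 ≠ ⊤ ∨ S.Sinf ≠ ⊤

end ADHMSub

/-- The whole representation, viewed as a submodule of itself. -/
def ADHMData.top (X : ADHMData r V0 V1 Vinf) : ADHMSub X where
  S0 := ⊤
  S1 := ⊤
  Sinf := ⊤
  hB1 := fun _ _ => Submodule.mem_top
  hB2 := fun _ _ => Submodule.mem_top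
  hd := fun _ _ => Submodule.mem_top
  hi := fun _ _ _ => Submodule.mem_top
  hj := fun _ _ _ => Submodule.mem_top

/-- A flag of `V1` of length `N`: increasing with 1-dimensional (or zero) steps. -/
structure IsFlag (N : ℕ) (F : ℕ → Submodule ℂ V1) : Prop where
  bot : F 0 = ⊥
  top : F N = ⊤
  mono : ∀ k < N, F k ≤ F (k + 1)
  step : ∀ k < N, finrank ℂ ↥(F (k + 1)) ≤ finrank ℂ ↥(F k) + 1

/-- A full flag of `V1` of length `N`: increasing with exactly 1-dimensional steps. -/
structure IsFullFlag (N : ℕ) (F : ℕ → Submodule ℂ V1) : Prop where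
  bot : F 0 = ⊥
  top : F N = ⊤
  mono : ∀ k < N, F k ≤ F (k + 1)
  dim : ∀ k ≤ N, finrank ℂ ↥(F k) = k

/-- `(ζ,n)`-stability of the pair `(X, F)`. -/
def PairStable (X : ADHMData r V0 V1 Vinf) (ζ : ℚ × ℚ × ℚ) (n : ℕ → ℚ) (N : ℕ)
    (F : ℕ → Submodule ℂ V1) : Prop :=
  ∀ S : ADHMSub X, S.IsNonzero → S.IsProper → S.mu ζ n N F < X.top.mu ζ n N F

/-- `(ζ,n)`-semistability of the pair `(X, F)`. -/
def PairSemistable (X : ADHMData r V0 V1 Vinf) (ζ : ℚ × ℚ × ℚ) (n : ℕ → ℚ) (N : ℕ)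
    (F : ℕ → Submodule ℂ V1) : Prop :=
  ∀ S : ADHMSub X, S.IsNonzero → S.IsProper → S.mu ζ n N F ≤ X.top.mu ζ n N F

namespace ADHMSub

variable {X : ADHMData r V0 V1 Vinf}

/-- The ADHM representation obtained by restricting all structure maps to a submodule. -/
def subRep (S : ADHMSub X) : ADHMData r S.S0 S.S1 S.Sinf where
  B1 := X.B1.restrict S.hB1
  B2 := X.B2.restrict S.hB2
  d := X.d.restrict S.hd
  i := fun k => (X.i k).restrict (S.hi k)
  j := fun k => (X.j k).restrict (S.hj k)
  rel := by
    ext x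
    have hx := LinearMap.congr_fun X.rel (x : V1)
    simp only [LinearMap.add_apply, LinearMap.sub_apply, LinearMap.coe_comp,
      Function.comp_apply, LinearMap.sum_apply, LinearMap.zero_apply] at hx
    simp only [LinearMap.add_apply, LinearMap.sub_apply, LinearMap.coe_comp,
      Function.comp_apply, LinearMap.sum_apply, LinearMap.zero_apply,
      AddSubmonoidClass.coe_finset_sum, AddSubgroupClass.coe_sub, Submodule.coe_add,
      LinearMap.restrict_coe_apply, ZeroMemClass.coe_zero]
    exact hx

/-- The quotient ADHM representation of `X` by a submodule `S`. -/
def quotRep (S : ADHMSub X) : ADHMData r (V0 ⧸ S.S0) (V1 ⧸ S.S1) (Vinf ⧸ S.Sinf) where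
  B1 := Submodule.mapQ S.S1 S.S0 X.B1 (fun x hx => S.hB1 x hx)
  B2 := Submodule.mapQ S.S1 S.S0 X.B2 (fun x hx => S.hB2 x hx)
  d := Submodule.mapQ S.S0 S.S1 X.d (fun x hx => S.hd x hx)
  i := fun k => Submodule.mapQ S.Sinf S.S0 (X.i k) (fun x hx => S.hi k x hx)
  j := fun k => Submodule.mapQ S.S1 S.Sinf (X.j k) (fun x hx => S.hj k x hx)
  rel := by
    refine Submodule.linearMap_qext _ ?_
    ext x
    have hx := LinearMap.congr_fun X.rel x
    simp only [LinearMap.add_apply, LinearMap.sub_apply, LinearMap.coe_comp,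
      Function.comp_apply, LinearMap.sum_apply, LinearMap.zero_apply] at hx
    simp only [LinearMap.add_apply, LinearMap.sub_apply, LinearMap.coe_comp,
      Function.comp_apply, LinearMap.sum_apply, LinearMap.zero_apply,
      Submodule.mkQ_apply, Submodule.mapQ_apply]
    have hsum : (∑ k : Fin r, Submodule.Quotient.mk (p := S.S0) (X.i k (X.j k x)))
        = Submodule.Quotient.mk (∑ k : Fin r, X.i k (X.j k x)) := by
      rw [← Submodule.mkQ_apply, map_sum]
      simp [Submodule.mkQ_apply]
    rw [hsum, ← Submodule.Quotient.mk_sub, ← Submodule.Quotient.mk_add, hx,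
      Submodule.Quotient.mk_zero]

end ADHMSub

end ADHMPrelim


section StarPrelim

/-- `ζ·s` for a triple of rationals and a triple of naturals. -/
def zdot (z : ℚ × ℚ × ℚ) (s : ℕ × ℕ × ℕ) : ℚ :=
  z.1 * s.1 + z.2.1 * s.2.1 + z.2.2 * s.2.2

/-- `rank s = s₀ + s₁ + s∞`. -/
def srank (s : ℕ × ℕ × ℕ) : ℚ := (s.1 : ℚ) + (s.2.1 : ℚ) + (s.2.2 : ℚ)

/-- The finite set `D` of dimension triples `s ≠ 0` with `0 ≤ s₀ ≤ v₀`, `0 ≤ s₁ ≤ v₁`,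
`s∞ ∈ {0,1}` and `ζ⁰·s ≠ 0`. -/
def Dset (v0 v1 : ℕ) (z0 : ℚ × ℚ × ℚ) : Finset (ℕ × ℕ × ℕ) :=
  (Finset.Iic v0 ×ˢ Finset.Iic v1 ×ˢ Finset.Iic 1).filter
    (fun s => s ≠ (0, 0, 0) ∧ zdot z0 s ≠ 0)

/-- Condition (★) on the stability parameter `(ζ, n)`, relative to `(m, v₀, v₁, ℓ, ζ⁰)`. -/
def SatisfiesStar (m v0 v1 ℓ : ℕ) (z0 ζ : ℚ × ℚ × ℚ) (n : ℕ → ℚ) : Prop :=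
  -- (a)
  ζ.1 * (v0 : ℚ) + ζ.2.1 * (v1 : ℚ) + ζ.2.2 = 0 ∧
  -- (b)
  (∀ k ∈ Finset.Icc 1 (v1 - 1),
      ((v0 : ℚ) + (v1 : ℚ) + 1) * ∑ i ∈ Finset.Icc (k + 1) v1, (i : ℚ) * n i < n k ∧
      0 < ((v0 : ℚ) + (v1 : ℚ) + 1) * ∑ i ∈ Finset.Icc (k + 1) v1, (i : ℚ) * n i) ∧
  -- (c)
  (∀ s ∈ Dset v0 v1 z0, ∀ s' ∈ Dset v0 v1 z0,
      |zdot z0 s - zdot ζ s| / srank s + ∑ i ∈ Finset.Icc 1 v1, (i : ℚ) * n i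
        < |zdot z0 s'| / srank s') ∧
  -- (d)
  (0 < (∑ i ∈ Finset.Icc 1 ℓ, (i : ℚ) * n i)
        - (((v0 : ℚ) + (v1 : ℚ) + 1) / (2 * (m : ℚ) + 1))
          * ((m : ℚ) * ζ.1 + ((m : ℚ) + 1) * ζ.2.1) ∧
   (∑ i ∈ Finset.Icc 1 ℓ, (i : ℚ) * n i)
        - (((v0 : ℚ) + (v1 : ℚ) + 1) / (2 * (m : ℚ) + 1))
          * ((m : ℚ) * ζ.1 + ((m : ℚ) + 1) * ζ.2.1) < n ℓ) ∧
  -- (e)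
  ((v0 : ℚ) + (v1 : ℚ) + 1) * ∑ i ∈ Finset.Icc (ℓ + 1) v1, (i : ℚ) * n i <
      min ((∑ i ∈ Finset.Icc 1 ℓ, (i : ℚ) * n i)
            - (((v0 : ℚ) + (v1 : ℚ) + 1) / (2 * (m : ℚ) + 1))
              * ((m : ℚ) * ζ.1 + ((m : ℚ) + 1) * ζ.2.1))
          ((n ℓ - ∑ i ∈ Finset.Icc 1 ℓ, (i : ℚ) * n i)
            + (((v0 : ℚ) + (v1 : ℚ) + 1) / (2 * (m : ℚ) + 1))
              * ((m : ℚ) * ζ.1 + ((m : ℚ) + 1) * ζ.2.1))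

end StarPrelim


private lemma sum_split_icc (v1 l : ℕ) (hlv : l ≤ v1) (h : ℕ → ℚ) :
    ∑ k ∈ Finset.Icc 1 v1, h k
      = ∑ k ∈ Finset.Icc 1 l, h k + ∑ k ∈ Finset.Icc (l+1) v1, h k := by
  rw [show (1:ℕ) = 0+1 from rfl, Finset.Icc_add_one_left_eq_Ioc, Finset.Icc_add_one_left_eq_Ioc, zero_add,
    Finset.Icc_add_one_left_eq_Ioc]
  exact (Finset.sum_Ioc_consecutive h (Nat.zero_le l) hlv).symm

private lemma keyA (v1 l : ℕ) (hl1 : 1 ≤ l) (hlv : l ≤ v1) (rk : ℚ) (hrk : 1 ≤ rk)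
    (n : ℕ → ℚ) (hn : ∀ k ∈ Finset.Icc 1 v1, 0 < n k)
    (hb : ∀ k ∈ Finset.Icc 1 (v1 - 1), rk * ∑ i ∈ Finset.Icc (k+1) v1, (i:ℚ) * n i < n k)
    (A : ℚ)
    (hA2 : rk * ∑ i ∈ Finset.Icc (l+1) v1, (i:ℚ) * n i < A)
    (hA3 : rk * ∑ i ∈ Finset.Icc (l+1) v1, (i:ℚ) * n i < n l - A)
    (σ : ℚ) (hσ1 : 1 ≤ σ) (hσ2 : σ ≤ rk)
    (g : ℕ → ℕ) (hg : ∀ k ∈ Finset.Icc 1 v1, g k ≤ k)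
    (hEq : rk * ∑ k ∈ Finset.Icc 1 v1, n k * (g k : ℚ)
        = σ * (A + ∑ i ∈ Finset.Icc (l+1) v1, (i:ℚ) * n i)) : False := by
  set T' : ℚ := ∑ i ∈ Finset.Icc (l+1) v1, (i:ℚ) * n i with hT'
  set L : ℚ := ∑ k ∈ Finset.Icc 1 v1, n k * (g k : ℚ) with hL
  have hrk0 : (0:ℚ) < rk := by linarith
  have hmemtail : ∀ i ∈ Finset.Icc (l+1) v1, i ∈ Finset.Icc 1 v1 := by
    intro i hi; simp only [Finset.mem_Icc] at hi ⊢; omega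
  have hT'0 : 0 ≤ T' := by
    apply Finset.sum_nonneg
    intro i hi
    have := hn i (hmemtail i hi)
    positivity
  have hnl : 0 < n l := hn l (by simp [Finset.mem_Icc]; omega)
  have hA1 : 0 < A := lt_of_le_of_lt (by positivity) hA2
  -- upper bound : L < n l
  have hub : L < n l := by
    have h1 : σ * (A + T') ≤ rk * (A + T') :=
      mul_le_mul_of_nonneg_right hσ2 (by linarith)
    have hAT : A + T' < n l := by
      nlinarith [mul_nonneg (by linarith : (0:ℚ) ≤ rk - 1) hT'0]
    have h2 : rk * (A + T') < rk * n l := mul_lt_mul_of_pos_left hAT hrk0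
    have : rk * L < rk * n l := by rw [hEq]; linarith
    exact lt_of_mul_lt_mul_left this (le_of_lt hrk0)
  -- lower bound : T' < L
  have hlb : T' < L := by
    have h1 : A + T' ≤ σ * (A + T') := by nlinarith
    have : rk * T' < rk * L := by rw [hEq]; nlinarith
    exact lt_of_mul_lt_mul_left this (le_of_lt hrk0)
  by_cases hz : ∀ k ∈ Finset.Icc 1 l, g k = 0
  · have : L ≤ T' := by
      rw [hL, sum_split_icc v1 l hlv]
      have hh1 : ∑ k ∈ Finset.Icc 1 l, n k * (g k : ℚ) = 0 := by
        apply Finset.sum_eq_zero; intro k hk; rw [hz k hk]; simp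
      rw [hh1, zero_add, hT']
      apply Finset.sum_le_sum
      intro i hi
      have hni := hn i (hmemtail i hi)
      have hgi : (g i : ℚ) ≤ (i : ℚ) := by
        exact_mod_cast Nat.cast_le.mpr (hg i (hmemtail i hi))
      nlinarith
    linarith
  · push_neg at hz
    obtain ⟨k₀, hk₀mem, hk₀⟩ := hz
    have hk₀mem' : k₀ ∈ Finset.Icc 1 v1 := by
      simp only [Finset.mem_Icc] at hk₀mem ⊢; omega
    have hg1 : (1:ℚ) ≤ (g k₀ : ℚ) := by exact_mod_cast Nat.one_le_iff_ne_zero.mpr hk₀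
    have hnk₀ : 0 < n k₀ := hn k₀ hk₀mem'
    have hLk : n k₀ ≤ L := by
      calc n k₀ = n k₀ * 1 := by ring
        _ ≤ n k₀ * (g k₀ : ℚ) := by nlinarith
        _ ≤ L := by
            rw [hL]
            refine Finset.single_le_sum (f := fun k : ℕ => n k * (g k : ℚ))
              (fun i hi => ?_) hk₀mem'
            have := hn i hi
            positivity
    have hnlk : n l ≤ n k₀ := by
      rcases eq_or_lt_of_le (Finset.mem_Icc.mp hk₀mem).2 with h | h
      · rw [h]
      · have hbk := hb k₀ (by simp only [Finset.mem_Icc] at hk₀mem ⊢; omega)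
        have hltail : (l:ℚ) * n l ≤ ∑ i ∈ Finset.Icc (k₀+1) v1, (i:ℚ) * n i := by
          have hlmem : l ∈ Finset.Icc (k₀+1) v1 := Finset.mem_Icc.mpr (by omega)
          refine Finset.single_le_sum (f := fun i : ℕ => (i:ℚ) * n i) (fun i hi => ?_) hlmem
          have hi' : i ∈ Finset.Icc 1 v1 := by
            simp only [Finset.mem_Icc] at hi hk₀mem ⊢; omega
          have := hn i hi'
          positivity
        have hl1' : (1:ℚ) ≤ (l:ℚ) := by exact_mod_cast hl1
        have e1 : rk * ((l:ℚ) * n l) ≤ rk * ∑ i ∈ Finset.Icc (k₀+1) v1, (i:ℚ) * n i :=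
          mul_le_mul_of_nonneg_left hltail hrk0.le
        have e2 : (l:ℚ) * n l ≤ rk * ((l:ℚ) * n l) :=
          le_mul_of_one_le_left (mul_nonneg (by positivity) hnl.le) hrk
        have e3 : n l ≤ (l:ℚ) * n l := le_mul_of_one_le_left hnl.le hl1'
        linarith
    linarith

set_option maxHeartbeats 1000000

/-- Under condition (★), `(ζ,n)`-semistability implies `(ζ,n)`-stability. -/
theorem pairSemistable_implies_pairStable
    (r m v0 v1 ℓ : ℕ) (hr : 1 ≤ r) (hv0 : 1 ≤ v0) (hv1 : 1 ≤ v1)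
    (hℓ : ℓ ∈ Finset.Icc 1 v1)
    (z0 ζ : ℚ × ℚ × ℚ) (n : ℕ → ℚ)
    (hz0 : z0.1 < 0)
    (hwall : (m : ℚ) * z0.1 + ((m : ℚ) + 1) * z0.2.1 = 0)
    (hnorm : z0.1 * (v0 : ℚ) + z0.2.1 * (v1 : ℚ) + z0.2.2 = 0)
    (hn : ∀ k ∈ Finset.Icc 1 v1, 0 < n k)
    (hstar : SatisfiesStar m v0 v1 ℓ z0 ζ n)
    {V0 V1 Vinf : Type*} [AddCommGroup V0] [Module ℂ V0] [FiniteDimensional ℂ V0]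
    [AddCommGroup V1] [Module ℂ V1] [FiniteDimensional ℂ V1]
    [AddCommGroup Vinf] [Module ℂ Vinf] [FiniteDimensional ℂ Vinf]
    (X : ADHMData r V0 V1 Vinf)
    (hV0 : finrank ℂ V0 = v0) (hV1 : finrank ℂ V1 = v1) (hVinf : finrank ℂ Vinf = 1)
    (F : ℕ → Submodule ℂ V1) (hF : IsFullFlag v1 F)
    (hss : PairSemistable X ζ n v1 F) :
    PairStable X ζ n v1 F := by
  intro S hnz hprop
  by_contra hlt
  have heq : S.mu ζ n v1 F = X.top.mu ζ n v1 F :=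
    le_antisymm (hss S hnz hprop) (not_lt.mp hlt)
  obtain ⟨hza, hzb, hzc, hzd, hze⟩ := hstar
  set s0 := finrank ℂ S.S0 with hs0
  set s1 := finrank ℂ S.S1 with hs1
  set si := finrank ℂ S.Sinf with hsi
  have hl1 : 1 ≤ ℓ := (Finset.mem_Icc.mp hℓ).1
  have hlv : ℓ ≤ v1 := (Finset.mem_Icc.mp hℓ).2
  have hs0v : s0 ≤ v0 := by rw [hs0, ← hV0]; exact Submodule.finrank_le S.S0
  have hs1v : s1 ≤ v1 := by rw [hs1, ← hV1]; exact Submodule.finrank_le S.S1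
  have hsiv : si ≤ 1 := by rw [hsi, ← hVinf]; exact Submodule.finrank_le S.Sinf
  have hpos : 1 ≤ s0 + s1 + si := by
    rcases hnz with h | h | h
    · have h0 : s0 ≠ 0 := by
        intro h0; apply h; rw [hs0] at h0; exact Submodule.finrank_eq_zero.mp h0
      omega
    · have h0 : s1 ≠ 0 := by
        intro h0; apply h; rw [hs1] at h0; exact Submodule.finrank_eq_zero.mp h0
      omega
    · have h0 : si ≠ 0 := by
        intro h0; apply h; rw [hsi] at h0; exact Submodule.finrank_eq_zero.mp h0
      omega
  set f : ℕ → ℕ := fun k => finrank ℂ ↥(S.S1 ⊓ F k) with hf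
  have hfk : ∀ k ∈ Finset.Icc 1 v1, f k ≤ k := by
    intro k hk
    have h1 : finrank ℂ ↥(S.S1 ⊓ F k) ≤ finrank ℂ ↥(F k) :=
      Submodule.finrank_mono inf_le_right
    rw [hF.dim k (Finset.mem_Icc.mp hk).2] at h1
    exact h1
  set T : ℚ := ∑ k ∈ Finset.Icc 1 v1, (k:ℚ) * n k with hT
  set Tl : ℚ := ∑ i ∈ Finset.Icc 1 ℓ, (i:ℚ) * n i with hTl
  set T' : ℚ := ∑ i ∈ Finset.Icc (ℓ+1) v1, (i:ℚ) * n i with hT2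
  have hTsplit : T = Tl + T' := by
    rw [hT, hTl, hT2]; exact sum_split_icc v1 ℓ hlv _
  set SS : ℚ := ∑ k ∈ Finset.Icc 1 v1, n k * (f k : ℚ) with hSS
  set rkQ : ℚ := (v0:ℚ) + (v1:ℚ) + 1 with hrkQdef
  have hv0Q : (1:ℚ) ≤ (v0:ℚ) := by exact_mod_cast hv0
  have hv1Q : (1:ℚ) ≤ (v1:ℚ) := by exact_mod_cast hv1
  have hrkQ1 : (1:ℚ) ≤ rkQ := by rw [hrkQdef]; linarith
  have hrkQ0 : (0:ℚ) < rkQ := by linarith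
  have hRpos : (0:ℚ) < (s0:ℚ) + (s1:ℚ) + (si:ℚ) := by
    have h : (1:ℚ) ≤ (s0:ℚ) + (s1:ℚ) + (si:ℚ) := by exact_mod_cast hpos
    linarith
  have hRle : (s0:ℚ) + (s1:ℚ) + (si:ℚ) ≤ rkQ := by
    rw [hrkQdef]
    have a0 : (s0:ℚ) ≤ (v0:ℚ) := by exact_mod_cast hs0v
    have a1 : (s1:ℚ) ≤ (v1:ℚ) := by exact_mod_cast hs1v
    have a2 : (si:ℚ) ≤ 1 := by exact_mod_cast hsiv
    linarith
  have hSmu : S.mu ζ n v1 F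
      = ((ζ.1*(s0:ℚ) + ζ.2.1*(s1:ℚ) + ζ.2.2*(si:ℚ)) + SS) / ((s0:ℚ)+(s1:ℚ)+(si:ℚ)) := by
    simp only [ADHMSub.mu, ADHMSub.zdeg, ADHMSub.rank, hSS, hf, hs0, hs1, hsi]
  have htopmu : X.top.mu ζ n v1 F = T / rkQ := by
    have t0 : finrank ℂ X.top.S0 = v0 := by rw [← hV0]; exact finrank_top ℂ V0
    have t1 : finrank ℂ X.top.S1 = v1 := by rw [← hV1]; exact finrank_top ℂ V1
    have ti : finrank ℂ X.top.Sinf = 1 := by rw [← hVinf]; exact finrank_top ℂ Vinf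
    have e0 : X.top.zdeg ζ = 0 := by
      simp only [ADHMSub.zdeg, t0, t1, ti]
      push_cast
      linarith [hza]
    have e1 : ∀ k ∈ Finset.Icc 1 v1,
        n k * (finrank ℂ ↥(X.top.S1 ⊓ F k) : ℚ) = (k:ℚ) * n k := by
      intro k hk
      have htopS1 : X.top.S1 = (⊤ : Submodule ℂ V1) := rfl
      rw [htopS1, top_inf_eq, hF.dim k (Finset.mem_Icc.mp hk).2, mul_comm]
    have e2 : X.top.rank = rkQ := by
      simp only [ADHMSub.rank, t0, t1, ti, hrkQdef]
      push_cast
      ring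
    unfold ADHMSub.mu
    rw [e0, zero_add, e2, Finset.sum_congr rfl e1, ← hT]
  rw [hSmu, htopmu, div_eq_div_iff (ne_of_gt hRpos) (ne_of_gt hrkQ0)] at heq
  have hkey : rkQ * ((ζ.1*(s0:ℚ) + ζ.2.1*(s1:ℚ) + ζ.2.2*(si:ℚ)) + SS)
      = ((s0:ℚ)+(s1:ℚ)+(si:ℚ)) * T := by linear_combination heq
  have hSS0 : 0 ≤ SS := by
    rw [hSS]
    apply Finset.sum_nonneg
    intro k hk
    have := hn k hk
    positivity
  have hSST : SS ≤ T := by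
    rw [hSS, hT]
    apply Finset.sum_le_sum
    intro k hk
    have hnk := hn k hk
    have hfkk : (f k : ℚ) ≤ (k:ℚ) := by exact_mod_cast hfk k hk
    calc n k * (f k : ℚ) ≤ n k * (k:ℚ) := mul_le_mul_of_nonneg_left hfkk hnk.le
      _ = (k:ℚ) * n k := by ring
  have hT0 : 0 ≤ T := by
    rw [hT]
    apply Finset.sum_nonneg
    intro k hk
    have := hn k hk
    positivity
  rcases eq_or_ne (zdot z0 (s0, s1, si)) 0 with hD0 | hD0
  · -- wall case
    set w : ℚ := (m:ℚ)*ζ.1 + ((m:ℚ)+1)*ζ.2.1 with hw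
    set c : ℚ := rkQ / (2*(m:ℚ)+1) with hcdef
    have h2m : (0:ℚ) < 2*(m:ℚ)+1 := by positivity
    have hc' : c * (2*(m:ℚ)+1) = rkQ := div_mul_cancel₀ _ (ne_of_gt h2m)
    set A : ℚ := Tl - c * w with hA
    have hA2 : rkQ * T' < A := by
      have := lt_of_lt_of_le hze (min_le_left _ _)
      linarith
    have hA3 : rkQ * T' < n ℓ - A := by
      have := lt_of_lt_of_le hze (min_le_right _ _)
      rw [hA]
      linarith
    have hz0ne : z0.1 ≠ 0 := ne_of_lt hz0
    rcases (by omega : si = 0 ∨ si = 1) with hsi1 | hsi1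
    · -- s_infty = 0
      rw [hsi1] at hkey hD0
      have hD0' : z0.1 * (s0:ℚ) + z0.2.1 * (s1:ℚ) = 0 := by
        simp only [zdot] at hD0
        push_cast at hD0
        linarith
      have h1 : ((m:ℚ)+1) * (s0:ℚ) = (m:ℚ) * (s1:ℚ) := by
        have h0 : z0.1 * (((m:ℚ)+1) * (s0:ℚ) - (m:ℚ) * (s1:ℚ)) = 0 := by
          linear_combination ((m:ℚ)+1) * hD0' - (s1:ℚ) * hwall
        rcases mul_eq_zero.mp h0 with h | h
        · exact absurd h hz0ne
        · linarith
      have hσ1 : (1:ℚ) ≤ (s0:ℚ) + (s1:ℚ) := by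
        have h : 1 ≤ s0 + s1 := by omega
        exact_mod_cast h
      have hσ2 : (s0:ℚ) + (s1:ℚ) ≤ rkQ := by
        have a0 : (s0:ℚ) ≤ (v0:ℚ) := by exact_mod_cast hs0v
        have a1 : (s1:ℚ) ≤ (v1:ℚ) := by exact_mod_cast hs1v
        rw [hrkQdef]
        linarith
      have hzw : (2*(m:ℚ)+1) * (ζ.1 * (s0:ℚ) + ζ.2.1 * (s1:ℚ)) = ((s0:ℚ)+(s1:ℚ)) * w := by
        rw [hw]
        linear_combination (ζ.1 - ζ.2.1) * h1
      have hkey' : rkQ * (ζ.1*(s0:ℚ) + ζ.2.1*(s1:ℚ)) + rkQ * SS = ((s0:ℚ)+(s1:ℚ)) * T := by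
        push_cast at hkey
        linear_combination hkey
      have hEq : rkQ * SS = ((s0:ℚ)+(s1:ℚ)) * (A + T') := by
        linear_combination hkey' + ((s0:ℚ)+(s1:ℚ)) * hTsplit - ((s0:ℚ)+(s1:ℚ)) * hA
          - c * hzw + (ζ.1*(s0:ℚ) + ζ.2.1*(s1:ℚ)) * hc'
      exact keyA v1 ℓ hl1 hlv rkQ hrkQ1 n hn (fun k hk => (hzb k hk).1) A hA2 hA3
        ((s0:ℚ)+(s1:ℚ)) hσ1 hσ2 f hfk hEq
    · -- s_infty = 1
      rw [hsi1] at hkey hD0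
      have hSinf : S.Sinf = ⊤ := by
        apply Submodule.eq_top_of_finrank_eq
        rw [← hsi, hsi1, hVinf]
      have hlts : s0 + s1 < v0 + v1 := by
        rcases hprop with h | h | h
        · have hne : s0 ≠ v0 := by
            intro hh
            apply h
            apply Submodule.eq_top_of_finrank_eq
            rw [← hs0, hh, hV0]
          omega
        · have hne : s1 ≠ v1 := by
            intro hh
            apply h
            apply Submodule.eq_top_of_finrank_eq
            rw [← hs1, hh, hV1]
          omega
        · exact absurd hSinf h
      have hD0' : z0.1 * (s0:ℚ) + z0.2.1 * (s1:ℚ) + z0.2.2 = 0 := by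
        simp only [zdot] at hD0
        push_cast at hD0
        linarith
      have hw2 : z0.1 * ((v0:ℚ) - (s0:ℚ)) + z0.2.1 * ((v1:ℚ) - (s1:ℚ)) = 0 := by
        linear_combination hnorm - hD0'
      have h1 : ((m:ℚ)+1) * ((v0:ℚ)-(s0:ℚ)) = (m:ℚ) * ((v1:ℚ)-(s1:ℚ)) := by
        have h0 : z0.1 * (((m:ℚ)+1) * ((v0:ℚ)-(s0:ℚ)) - (m:ℚ) * ((v1:ℚ)-(s1:ℚ))) = 0 := by
          linear_combination ((m:ℚ)+1) * hw2 - ((v1:ℚ)-(s1:ℚ)) * hwall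
        rcases mul_eq_zero.mp h0 with h | h
        · exact absurd h hz0ne
        · linarith
      set σ : ℚ := ((v0:ℚ) - (s0:ℚ)) + ((v1:ℚ) - (s1:ℚ)) with hσdef
      have ha0 : (s0:ℚ) ≤ (v0:ℚ) := by exact_mod_cast hs0v
      have ha1 : (s1:ℚ) ≤ (v1:ℚ) := by exact_mod_cast hs1v
      have hσ1 : (1:ℚ) ≤ σ := by
        rw [hσdef]
        have h : (s0:ℚ) + (s1:ℚ) + 1 ≤ (v0:ℚ) + (v1:ℚ) := by
          have h' : s0 + s1 + 1 ≤ v0 + v1 := by omega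
          exact_mod_cast h'
        linarith
      have hσ2 : σ ≤ rkQ := by
        rw [hσdef, hrkQdef]
        have b0 : (0:ℚ) ≤ (s0:ℚ) := Nat.cast_nonneg _
        have b1 : (0:ℚ) ≤ (s1:ℚ) := Nat.cast_nonneg _
        linarith
      have hzw : (2*(m:ℚ)+1) * (ζ.1 * ((v0:ℚ)-(s0:ℚ)) + ζ.2.1 * ((v1:ℚ)-(s1:ℚ)))
          = σ * w := by
        rw [hσdef, hw]
        linear_combination (ζ.1 - ζ.2.1) * h1
      set g : ℕ → ℕ := fun k => k - f k with hg
      have hgk : ∀ k ∈ Finset.Icc 1 v1, g k ≤ k := by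
        intro k _
        simp only [hg]
        omega
      have hG : ∑ k ∈ Finset.Icc 1 v1, n k * (g k : ℚ) = T - SS := by
        rw [hT, hSS, ← Finset.sum_sub_distrib]
        apply Finset.sum_congr rfl
        intro k hk
        have hc2 : (g k : ℚ) = (k:ℚ) - (f k:ℚ) := by
          simp only [hg]
          have := hfk k hk
          push_cast [Nat.cast_sub this]
          ring
        rw [hc2]
        ring
      have hkey1 : rkQ * (ζ.1*(s0:ℚ) + ζ.2.1*(s1:ℚ) + ζ.2.2) + rkQ * SS
          = ((s0:ℚ)+(s1:ℚ)+1) * T := by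
        push_cast at hkey
        linear_combination hkey
      have hEq : rkQ * ∑ k ∈ Finset.Icc 1 v1, n k * (g k : ℚ) = σ * (A + T') := by
        rw [hG]
        linear_combination (-1 : ℚ) * hkey1 + rkQ * hza - c * hzw
          + (ζ.1*((v0:ℚ)-(s0:ℚ)) + ζ.2.1*((v1:ℚ)-(s1:ℚ))) * hc'
          + T * hrkQdef - T * hσdef + σ * hTsplit - σ * hA
      exact keyA v1 ℓ hl1 hlv rkQ hrkQ1 n hn (fun k hk => (hzb k hk).1) A hA2 hA3
        σ hσ1 hσ2 g hgk hEq
  · -- generic case : s lies in D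
    have hmem : ((s0, s1, si) : ℕ × ℕ × ℕ) ∈ Dset v0 v1 z0 := by
      simp only [Dset, Finset.mem_filter, Finset.mem_product, Finset.mem_Iic]
      refine ⟨⟨hs0v, hs1v, hsiv⟩, ?_, hD0⟩
      intro hcon
      rw [Prod.mk.injEq, Prod.mk.injEq] at hcon
      omega
    have hc := hzc _ hmem _ hmem
    have hsr : srank (s0, s1, si) = (s0:ℚ)+(s1:ℚ)+(si:ℚ) := rfl
    have hzs : zdot ζ (s0, s1, si) = ζ.1*(s0:ℚ) + ζ.2.1*(s1:ℚ) + ζ.2.2*(si:ℚ) := rfl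
    have hK1 : (1:ℚ) ≤ srank (s0, s1, si) := by
      rw [hsr]
      have h : (1:ℚ) ≤ (s0:ℚ) + (s1:ℚ) + (si:ℚ) := by exact_mod_cast hpos
      linarith
    have hK0 : (0:ℚ) < srank (s0, s1, si) := by linarith
    have habs : |zdot ζ (s0, s1, si)| ≤ T := by
      rw [hzs, abs_le]
      constructor
      · nlinarith [hkey, mul_nonneg hRpos.le hT0,
          mul_nonneg hrkQ0.le (show (0:ℚ) ≤ T - SS by linarith)]
      · nlinarith [hkey, mul_nonneg (show (0:ℚ) ≤ rkQ - ((s0:ℚ)+(s1:ℚ)+(si:ℚ)) by linarith) hT0]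
    have htri : |zdot z0 (s0, s1, si)|
        ≤ |zdot z0 (s0, s1, si) - zdot ζ (s0, s1, si)| + |zdot ζ (s0, s1, si)| := by
      have h := abs_sub_abs_le_abs_sub (zdot z0 (s0, s1, si)) (zdot ζ (s0, s1, si))
      linarith
    have hdiv : |zdot z0 (s0, s1, si)| / srank (s0, s1, si)
        ≤ (|zdot z0 (s0, s1, si) - zdot ζ (s0, s1, si)| + |zdot ζ (s0, s1, si)|)
            / srank (s0, s1, si) := by
      apply div_le_div_of_nonneg_right htri hK0.le
    rw [add_div] at hdiv
    have h6 : T < |zdot ζ (s0, s1, si)| / srank (s0, s1, si) := by linarith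
    have h7 : |zdot ζ (s0, s1, si)| / srank (s0, s1, si) ≤ |zdot ζ (s0, s1, si)| :=
      div_le_self (abs_nonneg _) hK1
    linarith
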